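/- Let $U\in C^1((0,\infty))$ be concave with $U'>0$, let $\xi$ be standard normal, $x>0$, $y\in\mathbb{R}$, and $H\in\mathbb{R}$. Then $\mathbb{E}\big[U'(e^{x\xi+y-x^2/2})\,e^{x\xi+y-x^2/2}\,\mathbf{1}_{\{\xi<H/x\}}\,(\xi-x)\big]\le -\,U'(e^{H+y-x^2/2})\,e^{H+y-x^2/2}\,N'(H/x)<0$, where $N'$ is the standard normal density. (Suitable integrability is assumed, e.g. $U'(w)\le C(w^\nu+w^{-\nu})$.) -/

import Mathlib

open MeasureTheory ProbabilityTheory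

/-- The standard normal density. -/
noncomputable def stdNormalPDF (x : ℝ) : ℝ := gaussianPDFReal 0 1 x

open Real Set
open scoped ENNReal NNReal

lemma stdNormalPDF_eq (u : ℝ) :
    stdNormalPDF u = (Real.sqrt (2 * π))⁻¹ * Real.exp (-u ^ 2 / 2) := by
  simp [stdNormalPDF, gaussianPDFReal]

lemma stdNormalPDF_pos (u : ℝ) : 0 < stdNormalPDF u :=
  gaussianPDFReal_pos 0 1 u one_ne_zero

lemma stdNormalPDF_nonneg (u : ℝ) : 0 ≤ stdNormalPDF u :=
  (stdNormalPDF_pos u).le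

lemma stdNormalPDF_continuous : Continuous stdNormalPDF := by
  simp only [funext stdNormalPDF_eq]
  continuity

lemma gauss_setIntegral (f : ℝ → ℝ) {s : Set ℝ} (hs : MeasurableSet s) :
    ∫ z in s, f z ∂(gaussianReal 0 1) = ∫ z in s, f z * stdNormalPDF z := by
  rw [gaussianReal_of_var_ne_zero 0 one_ne_zero]
  have h1 : (gaussianPDF 0 1) = fun z => ((gaussianPDFReal 0 1 z).toNNReal : ℝ≥0∞) := by
    funext z
    simp [gaussianPDF, ENNReal.ofReal]
  rw [h1, setIntegral_withDensity_eq_setIntegral_smul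
    ((measurable_gaussianPDFReal 0 1).real_toNNReal) f hs]
  apply setIntegral_congr_fun hs
  intro z _
  simp only [NNReal.smul_def, smul_eq_mul, Real.coe_toNNReal _ (gaussianPDFReal_nonneg 0 1 z)]
  rw [mul_comm]
  rfl

lemma int_base : Integrable (fun v : ℝ => v * Real.exp (-v ^ 2 / 2)) := by
  have h : Integrable (fun v : ℝ => v ^ (1 : ℝ) * Real.exp (-(1/2 : ℝ) * v ^ 2)) :=
    integrable_rpow_mul_exp_neg_mul_sq (by norm_num) (by norm_num)
  refine h.congr (Filter.Eventually.of_forall fun v => ?_)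
  simp only [Real.rpow_one]
  congr 1
  ring_nf

lemma int_base_abs : Integrable (fun v : ℝ => |v| * Real.exp (-v ^ 2 / 2)) := by
  have := int_base.abs
  refine this.congr (Filter.Eventually.of_forall fun v => ?_)
  simp only [abs_mul]
  rw [abs_of_pos (Real.exp_pos _)]

lemma int_exp_sq : Integrable (fun v : ℝ => Real.exp (-v ^ 2 / 2)) := by
  have h : Integrable (fun v : ℝ => Real.exp (-(1/2 : ℝ) * v ^ 2)) :=
    integrable_exp_neg_mul_sq (by norm_num)
  refine h.congr (Filter.Eventually.of_forall fun v => ?_)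
  simp only []
  congr 1
  ring

/-- main integrability helper -/
lemma int_aux (c d : ℝ) :
    Integrable (fun z : ℝ => Real.exp (c * z) * (|z - d| * Real.exp (-(z - d) ^ 2 / 2))) := by
  set K := Real.exp (c * d + c ^ 2 / 2) with hK
  have hbound : Integrable (fun z : ℝ =>
      K * (|z - (d + c)| * Real.exp (-(z - (d + c)) ^ 2 / 2)
        + |c| * Real.exp (-(z - (d + c)) ^ 2 / 2))) := by
    refine Integrable.const_mul ?_ K
    exact (int_base_abs.comp_sub_right (d + c)).add
      ((int_exp_sq.comp_sub_right (d + c)).const_mul |c|)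
  refine hbound.mono' ?_ (Filter.Eventually.of_forall fun z => ?_)
  · apply Continuous.aestronglyMeasurable
    continuity
  · have h1 : Real.exp (c * z) * Real.exp (-(z - d) ^ 2 / 2)
        = K * Real.exp (-(z - (d + c)) ^ 2 / 2) := by
      rw [hK, ← Real.exp_add, ← Real.exp_add]
      congr 1
      ring
    have h2 : |z - d| ≤ |z - (d + c)| + |c| := by
      have h3 : z - d = (z - (d + c)) + c := by ring
      rw [h3]
      exact abs_add_le _ _
    have hnn : 0 ≤ Real.exp (c * z) * (|z - d| * Real.exp (-(z - d) ^ 2 / 2)) := by positivity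
    rw [Real.norm_of_nonneg hnn]
    calc Real.exp (c * z) * (|z - d| * Real.exp (-(z - d) ^ 2 / 2))
        = |z - d| * (Real.exp (c * z) * Real.exp (-(z - d) ^ 2 / 2)) := by ring
      _ ≤ (|z - (d + c)| + |c|) * (Real.exp (c * z) * Real.exp (-(z - d) ^ 2 / 2)) := by
          apply mul_le_mul_of_nonneg_right h2; positivity
      _ = K * (|z - (d + c)| * Real.exp (-(z - (d + c)) ^ 2 / 2)
            + |c| * Real.exp (-(z - (d + c)) ^ 2 / 2)) := by rw [h1]; ring

lemma D_integrable (x : ℝ) : Integrable (fun z : ℝ => (z - x) * stdNormalPDF (z - x)) := by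
  have h := (int_base.comp_sub_right x).const_mul (Real.sqrt (2 * π))⁻¹
  refine h.congr (Filter.Eventually.of_forall fun z => ?_)
  simp only []
  rw [stdNormalPDF_eq]
  ring

lemma hasDerivAt_negPDF (x z : ℝ) :
    HasDerivAt (fun z => -stdNormalPDF (z - x)) ((z - x) * stdNormalPDF (z - x)) z := by
  have h1 : HasDerivAt (fun z : ℝ => -(z - x) ^ 2 / 2) (-(z - x)) z := by
    have := (((hasDerivAt_id z).sub_const x).pow 2).neg.div_const 2
    refine this.congr_deriv ?_
    simp
    ring_nf
  have h2 := (h1.exp.const_mul (Real.sqrt (2 * π))⁻¹).neg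
  have e : (fun z => -stdNormalPDF (z - x)) = -fun y => (√(2 * π))⁻¹ * rexp (-(y - x) ^ 2 / 2) := by
    funext w
    rw [stdNormalPDF_eq]
    rfl
  rw [e]
  refine h2.congr_deriv ?_
  rw [stdNormalPDF_eq]
  ring

lemma tendsto_negPDF (x : ℝ) :
    Filter.Tendsto (fun z => -stdNormalPDF (z - x)) Filter.atBot (nhds 0) := by
  have h1 : Filter.Tendsto (fun z : ℝ => -(z - x) ^ 2 / 2) Filter.atBot Filter.atBot := by
    have habs : Filter.Tendsto (fun z : ℝ => |z - x|) Filter.atBot Filter.atTop :=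
      Filter.tendsto_abs_atBot_atTop.comp (Filter.tendsto_atBot_add_const_right _ (-x)
        Filter.tendsto_id) |>.congr (fun z => by simp [sub_eq_add_neg])
    have hsq : Filter.Tendsto (fun z : ℝ => (z - x) ^ 2) Filter.atBot Filter.atTop := by
      have := (Filter.tendsto_pow_atTop (n := 2) two_ne_zero).comp habs
      refine this.congr fun z => ?_
      simp [sq_abs]
    have hneg : Filter.Tendsto (fun z : ℝ => -(z - x) ^ 2) Filter.atBot Filter.atBot :=
      (Filter.tendsto_neg_atTop_atBot).comp hsq
    exact Filter.Tendsto.atBot_div_const (by norm_num : (0:ℝ) < 2) hneg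
  have h2 := (Real.tendsto_exp_atBot.comp h1).const_mul (Real.sqrt (2 * π))⁻¹
  simpa [funext stdNormalPDF_eq, mul_comm] using h2.neg

lemma ftc_D (x a : ℝ) :
    ∫ z in Iio a, (z - x) * stdNormalPDF (z - x) = -stdNormalPDF (a - x) := by
  have key := integral_Iic_of_hasDerivAt_of_tendsto'
    (f := fun z => -stdNormalPDF (z - x)) (f' := fun z => (z - x) * stdNormalPDF (z - x))
    (a := a) (m := 0) (fun z _ => hasDerivAt_negPDF x z)
    ((D_integrable x).integrableOn) (tendsto_negPDF x)
  simp only [sub_zero] at key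
  rw [← key]
  exact (integral_Iic_eq_integral_Iio).symm

/-- A differentiable concave function has antitone derivative. -/
lemma U'_antitone (U U' : ℝ → ℝ)
    (hderiv : ∀ w : ℝ, 0 < w → HasDerivAt U (U' w) w)
    (hconc : ConcaveOn ℝ (Set.Ioi 0) U)
    {w₁ w₂ : ℝ} (h1 : 0 < w₁) (h12 : w₁ ≤ w₂) : U' w₂ ≤ U' w₁ := by
  rcases eq_or_lt_of_le h12 with rfl | hlt
  · exact le_rfl
  · have h2 : (0:ℝ) < w₂ := lt_trans h1 hlt
    have hconv : ConvexOn ℝ (Set.Ioi 0) (-U) := hconc.neg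
    have ha := hconv.le_slope_of_hasDerivAt (mem_Ioi.2 h1) (mem_Ioi.2 h2) hlt
      ((hderiv w₁ h1).neg)
    have hb := hconv.slope_le_of_hasDerivAt (mem_Ioi.2 h1) (mem_Ioi.2 h2) hlt
      ((hderiv w₂ h2).neg)
    have := ha.trans hb
    linarith
/-- Key Stein-type truncated inequality showing that the cumulative-risk partial
derivative of the GDA value is negative. -/
theorem truncated_stein_inequality
    (U U' : ℝ → ℝ)
    (hderiv : ∀ w : ℝ, 0 < w → HasDerivAt U (U' w) w)
    (hU'cont : ContinuousOn U' (Set.Ioi 0))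
    (hconc : ConcaveOn ℝ (Set.Ioi 0) U)
    (hU'pos : ∀ w : ℝ, 0 < w → 0 < U' w)
    (hgrowth : ∃ C ν : ℝ, 0 < C ∧ 0 < ν ∧
      ∀ w : ℝ, 0 < w → U' w ≤ C * (w ^ ν + w ^ (-ν)))
    (x y H : ℝ) (hx : 0 < x) :
    (∫ z in Set.Iio (H / x),
        U' (Real.exp (x * z + y - x ^ 2 / 2)) * Real.exp (x * z + y - x ^ 2 / 2)
          * (z - x) ∂(gaussianReal 0 1))
      ≤ -(U' (Real.exp (H + y - x ^ 2 / 2)) * Real.exp (H + y - x ^ 2 / 2)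
          * stdNormalPDF (H / x)) ∧
    -(U' (Real.exp (H + y - x ^ 2 / 2)) * Real.exp (H + y - x ^ 2 / 2)
        * stdNormalPDF (H / x)) < 0 := by
  set b : ℝ := H / x with hb
  set E : ℝ → ℝ := fun z => Real.exp (x * z + y - x ^ 2 / 2) with hE
  set ψ : ℝ → ℝ := fun z => U' (E z) * Real.exp y with hψ
  set D : ℝ → ℝ := fun z => (z - x) * stdNormalPDF (z - x) with hD
  have hEpos : ∀ z, 0 < E z := fun z => Real.exp_pos _
  have hψpos : ∀ z, 0 < ψ z := fun z => mul_pos (hU'pos _ (hEpos z)) (Real.exp_pos y)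
  have hEb : E b = Real.exp (H + y - x ^ 2 / 2) := by
    simp only [hE, hb]
    congr 1
    field_simp
  -- monotonicity of ψ
  have hψanti : ∀ z₁ z₂ : ℝ, z₁ ≤ z₂ → ψ z₂ ≤ ψ z₁ := by
    intro z₁ z₂ h12
    have hEle : E z₁ ≤ E z₂ := by
      apply Real.exp_le_exp.2
      nlinarith
    exact mul_le_mul_of_nonneg_right
      (U'_antitone U U' hderiv hconc (hEpos z₁) hEle) (Real.exp_pos y).le
  -- density identity
  have hEN : ∀ z, E z * stdNormalPDF z = Real.exp y * stdNormalPDF (z - x) := by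
    intro z
    rw [stdNormalPDF_eq, stdNormalPDF_eq]
    have hkey : Real.exp (x * z + y - x ^ 2 / 2) * Real.exp (-z ^ 2 / 2)
        = Real.exp y * Real.exp (-(z - x) ^ 2 / 2) := by
      rw [← Real.exp_add, ← Real.exp_add]
      congr 1
      ring
    calc E z * ((Real.sqrt (2 * π))⁻¹ * Real.exp (-z ^ 2 / 2))
        = (Real.sqrt (2 * π))⁻¹ * (Real.exp (x * z + y - x ^ 2 / 2) * Real.exp (-z ^ 2 / 2)) := by
          rw [hE]; ring
      _ = Real.exp y * ((Real.sqrt (2 * π))⁻¹ * Real.exp (-(z - x) ^ 2 / 2)) := by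
          rw [hkey]; ring
  -- continuity of ψ
  have hψcont : Continuous ψ := by
    have hU'E : Continuous fun z => U' (E z) := by
      refine ContinuousOn.comp_continuous hU'cont ?_ (fun z => mem_Ioi.2 (hEpos z))
      exact Real.continuous_exp.comp (by continuity)
    exact hU'E.mul continuous_const
  have hDcont : Continuous D := by
    apply Continuous.mul (by continuity)
    exact stdNormalPDF_continuous.comp (by continuity)
  -- global integrability of ψ * D
  have hIntPsiD : Integrable (fun z => ψ z * D z) := by
    obtain ⟨C, ν, hC, hν, hg⟩ := hgrowth
    set B : ℝ → ℝ := fun z =>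
      C * (Real.exp ((ν * x) * z) * Real.exp (ν * (y - x ^ 2 / 2))
          + Real.exp ((-(ν * x)) * z) * Real.exp ((-ν) * (y - x ^ 2 / 2)))
        * (Real.exp y * (|z - x| * ((Real.sqrt (2 * π))⁻¹ * Real.exp (-(z - x) ^ 2 / 2))))
      with hB
    have hBint : Integrable B := by
      have hsum := ((int_aux (ν * x) x).const_mul
          (C * Real.exp (ν * (y - x ^ 2 / 2)) * Real.exp y * (Real.sqrt (2 * π))⁻¹)).add
        ((int_aux (-(ν * x)) x).const_mul
          (C * Real.exp ((-ν) * (y - x ^ 2 / 2)) * Real.exp y * (Real.sqrt (2 * π))⁻¹))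
      refine hsum.congr (Filter.Eventually.of_forall fun z => ?_)
      simp only [hB, Pi.add_apply]
      ring
    refine hBint.mono' (hψcont.mul hDcont).aestronglyMeasurable
      (Filter.Eventually.of_forall fun z => ?_)
    have hDabs : |D z| = |z - x| * stdNormalPDF (z - x) := by
      rw [hD]
      rw [abs_mul, abs_of_pos (stdNormalPDF_pos (z - x))]
    have hnorm : ‖ψ z * D z‖ = ψ z * |D z| := by
      rw [Real.norm_eq_abs, abs_mul, abs_of_pos (hψpos z)]
    rw [hnorm, hDabs]
    have hr1 : E z ^ ν = Real.exp ((ν * x) * z) * Real.exp (ν * (y - x ^ 2 / 2)) := by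
      rw [hE]
      rw [← Real.exp_mul, ← Real.exp_add]
      congr 1
      ring
    have hr2 : E z ^ (-ν) = Real.exp ((-(ν * x)) * z) * Real.exp ((-ν) * (y - x ^ 2 / 2)) := by
      rw [hE]
      rw [← Real.exp_mul, ← Real.exp_add]
      congr 1
      ring
    have hU'le : U' (E z) ≤ C * (E z ^ ν + E z ^ (-ν)) := hg _ (hEpos z)
    calc ψ z * (|z - x| * stdNormalPDF (z - x))
        = U' (E z) * (Real.exp y * (|z - x| * stdNormalPDF (z - x))) := by rw [hψ]; ring
      _ ≤ (C * (E z ^ ν + E z ^ (-ν))) * (Real.exp y * (|z - x| * stdNormalPDF (z - x))) := by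
          apply mul_le_mul_of_nonneg_right hU'le
          exact mul_nonneg (Real.exp_pos y).le
            (mul_nonneg (abs_nonneg _) (stdNormalPDF_nonneg _))
      _ = B z := by
          rw [hr1, hr2, hB, stdNormalPDF_eq]
  -- rewrite the integral through the density
  have hconv : (∫ z in Set.Iio b,
      U' (Real.exp (x * z + y - x ^ 2 / 2)) * Real.exp (x * z + y - x ^ 2 / 2)
        * (z - x) ∂(gaussianReal 0 1)) = ∫ z in Set.Iio b, ψ z * D z := by
    rw [gauss_setIntegral _ measurableSet_Iio]
    apply setIntegral_congr_fun measurableSet_Iio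
    intro z _
    have := hEN z
    simp only [hψ, hD, hE] at *
    linear_combination (U' (Real.exp (x * z + y - x ^ 2 / 2)) * (z - x)) * this
  -- rewrite the RHS
  have hRHS : U' (Real.exp (H + y - x ^ 2 / 2)) * Real.exp (H + y - x ^ 2 / 2)
      * stdNormalPDF b = ψ b * stdNormalPDF (b - x) := by
    rw [← hEb, hψ]
    linear_combination U' (E b) * (hEN b)
  constructor
  · rw [hconv, hRHS]
    -- split off the constant part
    have hIb : IntegrableOn (fun z => ψ z * D z) (Set.Iio b) := hIntPsiD.integrableOn
    have hDint := D_integrable x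
    have hDb : IntegrableOn D (Set.Iio b) := hDint.integrableOn
    have hmD : Integrable (fun z => (ψ z - ψ b) * D z) := by
      refine (hIntPsiD.sub (hDint.const_mul (ψ b))).congr
        (Filter.Eventually.of_forall fun z => ?_)
      simp only [Pi.sub_apply]
      ring
    have hsplit : ∫ z in Set.Iio b, ψ z * D z
        = (∫ z in Set.Iio b, (ψ z - ψ b) * D z) + ψ b * ∫ z in Set.Iio b, D z := by
      rw [← integral_const_mul, ← integral_add hmD.integrableOn (hDb.const_mul (ψ b))]
      apply setIntegral_congr_fun measurableSet_Iio
      intro z _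
      simp only []
      ring
    have hftcb : ∫ z in Set.Iio b, D z = -stdNormalPDF (b - x) := ftc_D x b
    have key : ∫ z in Set.Iio b, (ψ z - ψ b) * D z ≤ 0 := by
      by_cases hbx : b ≤ x
      · apply setIntegral_nonpos measurableSet_Iio
        intro z hz
        have hm : 0 ≤ ψ z - ψ b := sub_nonneg.2 (hψanti z b (le_of_lt hz))
        have hDz : D z ≤ 0 := by
          rw [hD]
          apply mul_nonpos_of_nonpos_of_nonneg _ (stdNormalPDF_nonneg _)
          have : z < b := hz
          linarith
        exact mul_nonpos_of_nonneg_of_nonpos hm hDz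
      · push_neg at hbx
        have hxb : x ≤ b := hbx.le
        have hunion : Set.Iio x ∪ Set.Ico x b = Set.Iio b := Set.Iio_union_Ico_eq_Iio hxb
        have hdisj : Disjoint (Set.Iio x) (Set.Ico x b) := by
          apply Set.disjoint_left.2
          intro z hz1 hz2
          exact absurd hz2.1 (not_le.2 hz1)
        have hsplit2 : ∫ z in Set.Iio b, (ψ z - ψ b) * D z
            = (∫ z in Set.Iio x, (ψ z - ψ b) * D z)
              + ∫ z in Set.Ico x b, (ψ z - ψ b) * D z := by
          rw [← hunion, setIntegral_union hdisj measurableSet_Ico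
            hmD.integrableOn hmD.integrableOn]
        have hftc0 : ∫ z in Set.Iio x, D z = -stdNormalPDF 0 := by
          have := ftc_D x x
          simpa using this
        have hIco : ∫ z in Set.Ico x b, D z = stdNormalPDF 0 - stdNormalPDF (b - x) := by
          have hDsum : ∫ z in Set.Iio b, D z
              = (∫ z in Set.Iio x, D z) + ∫ z in Set.Ico x b, D z := by
            rw [← hunion, setIntegral_union hdisj measurableSet_Ico
              hDint.integrableOn hDint.integrableOn]
          rw [hftcb, hftc0] at hDsum
          linarith
        have hmx : 0 ≤ ψ x - ψ b := sub_nonneg.2 (hψanti x b hxb)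
        have h1 : ∫ z in Set.Iio x, (ψ z - ψ b) * D z
            ≤ (ψ x - ψ b) * (-stdNormalPDF 0) := by
          rw [← hftc0, ← integral_const_mul]
          apply setIntegral_mono_on hmD.integrableOn
            ((hDint.const_mul (ψ x - ψ b)).integrableOn) measurableSet_Iio
          intro z hz
          have hzx : z < x := hz
          have hDz : D z ≤ 0 := by
            rw [hD]
            apply mul_nonpos_of_nonpos_of_nonneg _ (stdNormalPDF_nonneg _)
            linarith
          have hmz : ψ x - ψ b ≤ ψ z - ψ b := by
            have := hψanti z x hzx.le
            linarith
          exact mul_le_mul_of_nonpos_right hmz hDz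
        have h2 : ∫ z in Set.Ico x b, (ψ z - ψ b) * D z
            ≤ (ψ x - ψ b) * (stdNormalPDF 0 - stdNormalPDF (b - x)) := by
          rw [← hIco, ← integral_const_mul]
          apply setIntegral_mono_on hmD.integrableOn
            ((hDint.const_mul (ψ x - ψ b)).integrableOn) measurableSet_Ico
          intro z hz
          have hDz : 0 ≤ D z := by
            rw [hD]
            apply mul_nonneg _ (stdNormalPDF_nonneg _)
            have := hz.1
            linarith
          have hmz : ψ z - ψ b ≤ ψ x - ψ b := by
            have := hψanti x z hz.1
            linarith
          exact mul_le_mul_of_nonneg_right hmz hDz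
        calc ∫ z in Set.Iio b, (ψ z - ψ b) * D z
            ≤ (ψ x - ψ b) * (-stdNormalPDF 0)
              + (ψ x - ψ b) * (stdNormalPDF 0 - stdNormalPDF (b - x)) := by
              rw [hsplit2]; exact add_le_add h1 h2
          _ = -((ψ x - ψ b) * stdNormalPDF (b - x)) := by ring
          _ ≤ 0 := neg_nonpos.2 (mul_nonneg hmx (stdNormalPDF_nonneg _))
    rw [hsplit, hftcb]
    have : ψ b * -stdNormalPDF (b - x) = -(ψ b * stdNormalPDF (b - x)) := by ring
    linarith
  · apply neg_lt_zero.2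
    exact mul_pos (mul_pos (hU'pos _ (Real.exp_pos _)) (Real.exp_pos _)) (stdNormalPDF_pos _)
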